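/- For any matrix A, the row rank profile of A equals the row support of its rank profile matrix, and the column rank profile of A equals the column support of its rank profile matrix. -/

import Mathlib

open Matrix

/-- The leading `i×j` submatrix of a matrix. -/
def leadSub {K : Type*} [Field K] {m n : ℕ} (A : Matrix (Fin m) (Fin n) K) {i j : ℕ}
    (hi : i ≤ m) (hj : j ≤ n) : Matrix (Fin i) (Fin j) K :=
  A.submatrix (Fin.castLE hi) (Fin.castLE hj)

/-- An `r`-sub-permutation matrix: rank `r` with exactly `r` nonzero entries, all equal to 1. -/
def IsSubPerm {K : Type*} [Field K] {m n : ℕ} (r : ℕ) (R : Matrix (Fin m) (Fin n) K) : Prop :=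
  (∀ i j, R i j = 0 ∨ R i j = 1) ∧
  {p : Fin m × Fin n | R p.1 p.2 ≠ 0}.ncard = r ∧
  R.rank = r

/-- `R` is the rank profile matrix of `A`: the rank(A)-sub-permutation matrix each of whose
leading submatrices has the same rank as the corresponding leading submatrix of `A`. -/
def IsRPM {K : Type*} [Field K] {m n : ℕ} (A R : Matrix (Fin m) (Fin n) K) : Prop :=
  IsSubPerm A.rank R ∧
  ∀ (i j : ℕ) (hi : i ≤ m) (hj : j ≤ n),
    (leadSub R hi hj).rank = (leadSub A hi hj).rank

/-- `S` is the row rank profile of `A`: the lexicographically smallest set of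
`rank A` indices of linearly independent rows of `A`. -/
def IsRowRP {K : Type*} [Field K] {m n : ℕ} (A : Matrix (Fin m) (Fin n) K)
    (S : Finset (Fin m)) : Prop :=
  S.card = A.rank ∧ LinearIndependent K (fun i : S => A i) ∧
  ∀ T : Finset (Fin m), T.card = A.rank → LinearIndependent K (fun i : T => A i) →
    S = T ∨ List.Lex (· < ·) (S.sort (· ≤ ·)) (T.sort (· ≤ ·))

open Classical in
/-- Row support: the set of indices of nonzero rows. -/
noncomputable def rowSupp {K : Type*} [Field K] {m n : ℕ}
    (R : Matrix (Fin m) (Fin n) K) : Finset (Fin m) :=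
  Finset.univ.filter fun i => ∃ j, R i j ≠ 0

/-- The m×n block matrix [[I_r, 0], [0, 0]]. -/
def Jb (K : Type*) [Field K] (m n r : ℕ) : Matrix (Fin m) (Fin n) K :=
  Matrix.of fun i j => if (i : ℕ) = (j : ℕ) ∧ (i : ℕ) < r then 1 else 0

/-- The pivoting matrix `Π_{P,Q} = P [[I_r,0],[0,0]] Q` of a PLUQ decomposition of rank r. -/
noncomputable def PivMat (K : Type*) [Field K] {m n : ℕ}
    (σ : Equiv.Perm (Fin m)) (τ : Equiv.Perm (Fin n)) (r : ℕ) : Matrix (Fin m) (Fin n) K :=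
  σ.permMatrix K * Jb K m n r * τ.permMatrix K

/-- A permutation of `Fin n` is `k`-monotonically increasing if its last `n-k`
values form a strictly increasing sequence. -/
def MonoInc {n : ℕ} (k : ℕ) (σ : Equiv.Perm (Fin n)) : Prop :=
  ∀ a b : Fin n, k ≤ (a : ℕ) → a < b → σ a < σ b

/-! ### Auxiliary lemmas -/

namespace Stmt5Aux

lemma sort_min_cons {m : ℕ} (S : Finset (Fin m)) (hS : S.Nonempty) :
    S.sort (· ≤ ·) = S.min' hS :: (S.erase (S.min' hS)).sort (· ≤ ·) := by
  rw [← Finset.sort_insert (r := (· ≤ ·))]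
  · rw [Finset.insert_erase (S.min'_mem hS)]
  · intro b hb; exact S.min'_le b (Finset.mem_of_mem_erase hb)
  · exact Finset.notMem_erase _ _

lemma lex_aux {m : ℕ} : ∀ (k : ℕ) (S T : Finset (Fin m)), S.card = k → T.card = k →
    (∀ v : ℕ, (T.filter (fun x : Fin m => (x : ℕ) < v)).card ≤
      (S.filter (fun x : Fin m => (x : ℕ) < v)).card) →
    S = T ∨ List.Lex (· < ·) (S.sort (· ≤ ·)) (T.sort (· ≤ ·)) := by
  intro k
  induction k with
  | zero =>
    intro S T hS hT _
    left
    rw [Finset.card_eq_zero.mp hS, Finset.card_eq_zero.mp hT]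
  | succ k ih =>
    intro S T hS hT h
    have hSne : S.Nonempty := Finset.card_pos.mp (by omega)
    have hTne : T.Nonempty := Finset.card_pos.mp (by omega)
    have hab : S.min' hSne ≤ T.min' hTne := by
      have h1 : 0 < (T.filter (fun x : Fin m => (x : ℕ) < (T.min' hTne : ℕ) + 1)).card :=
        Finset.card_pos.mpr ⟨T.min' hTne, Finset.mem_filter.mpr ⟨T.min'_mem hTne, by omega⟩⟩
      have h2 := lt_of_lt_of_le h1 (h ((T.min' hTne : ℕ) + 1))
      obtain ⟨x, hx⟩ := Finset.card_pos.mp h2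
      have hx' := Finset.mem_filter.mp hx
      have h3 : S.min' hSne ≤ x := S.min'_le x hx'.1
      have h4 := hx'.2
      exact Fin.le_def.mpr (by omega)
    rcases lt_or_eq_of_le hab with hlt | heq
    · right
      rw [sort_min_cons S hSne, sort_min_cons T hTne]
      exact List.Lex.rel hlt
    · have haS : S.min' hSne ∈ S := S.min'_mem hSne
      have haT : S.min' hSne ∈ T := heq ▸ T.min'_mem hTne
      set a := S.min' hSne with ha
      have hcS : (S.erase a).card = k := by rw [Finset.card_erase_of_mem haS]; omega
      have hcT : (T.erase a).card = k := by rw [Finset.card_erase_of_mem haT]; omega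
      have hfil : ∀ v : ℕ, ((T.erase a).filter (fun x : Fin m => (x : ℕ) < v)).card ≤
          ((S.erase a).filter (fun x : Fin m => (x : ℕ) < v)).card := by
        intro v
        rw [Finset.filter_erase, Finset.filter_erase]
        by_cases hav : (a : ℕ) < v
        · have h1 : a ∈ S.filter (fun x : Fin m => (x : ℕ) < v) :=
            Finset.mem_filter.mpr ⟨haS, hav⟩
          have h2 : a ∈ T.filter (fun x : Fin m => (x : ℕ) < v) :=
            Finset.mem_filter.mpr ⟨haT, hav⟩
          rw [Finset.card_erase_of_mem h1, Finset.card_erase_of_mem h2]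
          exact Nat.sub_le_sub_right (h v) 1
        · have e1 : (T.filter (fun x : Fin m => (x : ℕ) < v)).erase a =
              T.filter (fun x : Fin m => (x : ℕ) < v) :=
            Finset.erase_eq_of_notMem (fun hc => hav (Finset.mem_filter.mp hc).2)
          have e2 : (S.filter (fun x : Fin m => (x : ℕ) < v)).erase a =
              S.filter (fun x : Fin m => (x : ℕ) < v) :=
            Finset.erase_eq_of_notMem (fun hc => hav (Finset.mem_filter.mp hc).2)
          rw [e1, e2]
          exact h v
      rcases ih (S.erase a) (T.erase a) hcS hcT hfil with heq' | hlex
      · left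
        have h5 : insert a (S.erase a) = insert a (T.erase a) := by rw [heq']
        rwa [Finset.insert_erase haS, Finset.insert_erase haT] at h5
      · right
        rw [sort_min_cons S hSne, sort_min_cons T hTne, ← heq, ← ha]
        exact List.Lex.cons hlex

section
variable {K : Type*} [Field K] {m n : ℕ}

open Module Submodule

lemma mem_rowSupp {R : Matrix (Fin m) (Fin n) K} {i : Fin m} :
    i ∈ rowSupp R ↔ ∃ j, R i j ≠ 0 := by
  simp [rowSupp]

lemma rowSupp_zero_row {R : Matrix (Fin m) (Fin n) K} {i : Fin m} (h : i ∉ rowSupp R) :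
    R i = 0 := by
  funext j
  by_contra hc
  exact h (mem_rowSupp.mpr ⟨j, hc⟩)

open Classical in
lemma ncard_eq_sum (R : Matrix (Fin m) (Fin n) K) :
    {p : Fin m × Fin n | R p.1 p.2 ≠ 0}.ncard =
      ∑ i, (Finset.univ.filter fun j => R i j ≠ 0).card := by
  classical
  have h1 : {p : Fin m × Fin n | R p.1 p.2 ≠ 0} =
      ↑(Finset.univ.filter fun p : Fin m × Fin n => R p.1 p.2 ≠ 0) := by
    ext p; simp
  rw [h1, Set.ncard_coe_finset]
  rw [Finset.card_eq_sum_card_fiberwise (f := Prod.fst) (t := Finset.univ)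
    (fun x _ => Finset.mem_univ _)]
  refine Finset.sum_congr rfl fun i _ => ?_
  have h2 : ((Finset.univ.filter fun p : Fin m × Fin n => R p.1 p.2 ≠ 0).filter
      fun p => p.1 = i) = (Finset.univ.filter fun j => R i j ≠ 0).image fun j => (i, j) := by
    ext ⟨a, b⟩
    simp only [Finset.mem_filter, Finset.mem_univ, true_and, Finset.mem_image, Prod.mk.injEq]
    constructor
    · rintro ⟨hab, rfl⟩; exact ⟨b, hab, rfl, rfl⟩
    · rintro ⟨j, hj, rfl, rfl⟩; exact ⟨hj, rfl⟩
  rw [h2, Finset.card_image_of_injective _ (fun a b hab => (Prod.mk.injEq _ _ _ _ ▸ hab).2)]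

lemma span_range_eq (R : Matrix (Fin m) (Fin n) K) :
    Submodule.span K (Set.range R) = Submodule.span K (R '' ↑(rowSupp R)) := by
  apply le_antisymm
  · rw [Submodule.span_le]
    rintro _ ⟨i, rfl⟩
    by_cases hi : i ∈ rowSupp R
    · exact Submodule.subset_span ⟨i, hi, rfl⟩
    · rw [rowSupp_zero_row hi]; exact (Submodule.span K _).zero_mem
  · exact Submodule.span_mono (Set.image_subset_range _ _)

lemma rank_le_rowSupp (R : Matrix (Fin m) (Fin n) K) : R.rank ≤ (rowSupp R).card := by
  classical
  rw [Matrix.rank_eq_finrank_span_row, Matrix.row, span_range_eq]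
  have h1 : R '' ↑(rowSupp R) = ↑((rowSupp R).image R) := (Finset.coe_image).symm
  rw [h1]
  exact le_trans (finrank_span_finset_le_card _) Finset.card_image_le

open Classical in
lemma subPerm_half {r : ℕ} {R : Matrix (Fin m) (Fin n) K} (h : IsSubPerm r R) :
    (rowSupp R).card = r ∧
      ∀ i ∈ rowSupp R, (Finset.univ.filter fun j => R i j ≠ 0).card = 1 := by
  classical
  obtain ⟨h01, hcnt, hrk⟩ := h
  set f : Fin m → ℕ := fun i => (Finset.univ.filter fun j => R i j ≠ 0).card with hf
  have hsum : ∑ i, f i = r := by rw [← ncard_eq_sum R] at *; exact hcnt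
  have hsupp : ∀ i, i ∈ rowSupp R ↔ 1 ≤ f i := by
    intro i
    rw [mem_rowSupp, Nat.one_le_iff_ne_zero, Ne, Finset.card_eq_zero, ← Ne,
      ← Finset.nonempty_iff_ne_empty]
    constructor
    · rintro ⟨j, hj⟩; exact ⟨j, Finset.mem_filter.mpr ⟨Finset.mem_univ _, hj⟩⟩
    · rintro ⟨j, hj⟩; exact ⟨j, (Finset.mem_filter.mp hj).2⟩
  have hsum' : ∑ i ∈ rowSupp R, f i = r := by
    rw [← hsum]
    apply Finset.sum_subset (Finset.subset_univ _)
    intro i _ hi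
    have := (hsupp i).not.mp hi
    omega
  have hcard_le : (rowSupp R).card ≤ r := by
    calc (rowSupp R).card = ∑ _i ∈ rowSupp R, 1 := by simp
    _ ≤ ∑ i ∈ rowSupp R, f i := Finset.sum_le_sum (fun i hi => (hsupp i).1 hi)
    _ = r := hsum'
  have hle2 : r ≤ (rowSupp R).card := hrk ▸ rank_le_rowSupp R
  have hcard : (rowSupp R).card = r := le_antisymm hcard_le hle2
  refine ⟨hcard, ?_⟩
  by_contra hc
  push_neg at hc
  obtain ⟨i0, hi0, hfi0⟩ := hc
  have hfi0' : f i0 ≠ 1 := hfi0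
  have h2 : 2 ≤ f i0 := by have := (hsupp i0).1 hi0; omega
  have : ∑ _i ∈ rowSupp R, 1 < ∑ i ∈ rowSupp R, f i :=
    Finset.sum_lt_sum (fun i hi => (hsupp i).1 hi) ⟨i0, hi0, by omega⟩
  simp only [Finset.sum_const, smul_eq_mul, mul_one] at this
  omega

lemma isSubPerm_transpose {r : ℕ} {R : Matrix (Fin m) (Fin n) K} (h : IsSubPerm r R) :
    IsSubPerm r Rᵀ := by
  obtain ⟨h01, hcnt, hrk⟩ := h
  refine ⟨fun i j => h01 j i, ?_, by rw [Matrix.rank_transpose]; exact hrk⟩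
  have himg : {p : Fin n × Fin m | Rᵀ p.1 p.2 ≠ 0} =
      Prod.swap '' {p : Fin m × Fin n | R p.1 p.2 ≠ 0} := by
    ext p
    constructor
    · intro hp; exact ⟨p.swap, hp, p.swap_swap⟩
    · rintro ⟨q, hq, rfl⟩; exact hq
  rw [himg, Set.ncard_image_of_injective _ Prod.swap_injective]
  exact hcnt

lemma rank_leadSub_row (A : Matrix (Fin m) (Fin n) K) {i : ℕ} (hi : i ≤ m) :
    (leadSub A hi (le_refl n)).rank =
      finrank K (span K (A '' {k : Fin m | (k : ℕ) < i})) := by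
  have h1 : leadSub A hi (le_refl n) = A ∘ Fin.castLE hi := rfl
  rw [Matrix.rank_eq_finrank_span_row, Matrix.row, h1]
  erw [Set.range_comp, Fin.range_castLE]

lemma span_pref_eq (A : Matrix (Fin m) (Fin n) K) {i : ℕ} (S : Finset (Fin m))
    (hz : ∀ k, k ∉ S → A k = 0) :
    span K (A '' {k : Fin m | (k : ℕ) < i}) =
      span K (A '' ↑(S.filter fun k : Fin m => (k : ℕ) < i)) := by
  apply le_antisymm
  · rw [span_le]
    rintro _ ⟨k, hk, rfl⟩
    by_cases hkS : k ∈ S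
    · refine subset_span ⟨k, ?_, rfl⟩
      simp only [Finset.coe_filter, Set.mem_setOf_eq]
      exact ⟨hkS, hk⟩
    · rw [hz k hkS]; exact (span K _).zero_mem
  · apply span_mono
    apply Set.image_mono
    intro k hk
    simp only [Finset.coe_filter, Set.mem_setOf_eq] at hk
    exact hk.2

open Classical in
lemma finrank_pref_subPerm (R : Matrix (Fin m) (Fin n) K) (S : Finset (Fin m))
    (hz : ∀ k, k ∉ S → R k = 0)
    (hrow : ∀ k ∈ S, ∃ j, R k = Pi.single j 1)
    (hcol : ∀ (k k' : Fin m) (j : Fin n), R k j ≠ 0 → R k' j ≠ 0 → k = k') (i : ℕ) :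
    finrank K (span K (R '' {k : Fin m | (k : ℕ) < i})) =
      (S.filter fun k : Fin m => (k : ℕ) < i).card := by
  classical
  rw [span_pref_eq R S hz]
  set Si := S.filter fun k : Fin m => (k : ℕ) < i with hSi
  have hmem : ∀ k : ↥Si, (k : Fin m) ∈ S := fun k => (Finset.mem_filter.mp k.2).1
  choose j hj using fun k : ↥Si => hrow k (hmem k)
  have hne : ∀ k : ↥Si, R (k : Fin m) (j k) ≠ 0 := by
    intro k
    rw [hj k, Pi.single_eq_same]
    exact one_ne_zero
  have hinj : Function.Injective j := by
    intro k k' hkk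
    have h1 : R (k' : Fin m) (j k) ≠ 0 := by rw [hkk]; exact hne k'
    exact Subtype.ext (hcol k k' (j k) (hne k) h1)
  have hli : LinearIndependent K (fun k : ↥Si => R (k : Fin m)) := by
    have hb : (fun k : ↥Si => R (k : Fin m)) = ⇑(Pi.basisFun K (Fin n)) ∘ j := by
      funext k
      rw [Function.comp_apply, Pi.basisFun_apply, hj k]
    rw [hb]
    exact (Pi.basisFun K (Fin n)).linearIndependent.comp j hinj
  have h2 := finrank_span_eq_card hli
  have h3 : R '' ↑Si = Set.range (fun k : ↥Si => R (k : Fin m)) := by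
    ext x
    constructor
    · rintro ⟨k, hk, rfl⟩; exact ⟨⟨k, hk⟩, rfl⟩
    · rintro ⟨⟨k, hk⟩, rfl⟩; exact ⟨k, hk, rfl⟩
  rw [h3, h2, Fintype.card_coe]

lemma span_pref_greedy (A : Matrix (Fin m) (Fin n) K) (S : Finset (Fin m))
    (hpref : ∀ i : ℕ, i ≤ m → finrank K (span K (A '' {k : Fin m | (k : ℕ) < i})) =
      (S.filter fun k : Fin m => (k : ℕ) < i).card) :
    ∀ i : ℕ, i ≤ m → span K (A '' {k : Fin m | (k : ℕ) < i}) =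
      span K (A '' ↑(S.filter fun k : Fin m => (k : ℕ) < i)) := by
  intro i
  induction i with
  | zero =>
    intro _
    have e1 : {k : Fin m | (k : ℕ) < 0} = (∅ : Set (Fin m)) := by ext k; simp
    have e2 : S.filter (fun k : Fin m => (k : ℕ) < 0) = ∅ :=
      Finset.filter_false_of_mem (fun k _ => by omega)
    rw [e1, e2]
    simp
  | succ i ih =>
    intro hi
    have him : i < m := hi
    set a : Fin m := ⟨i, him⟩ with ha
    have hset : {k : Fin m | (k : ℕ) < i + 1} = insert a {k : Fin m | (k : ℕ) < i} := by
      ext k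
      simp only [Set.mem_setOf_eq, Set.mem_insert_iff, Fin.ext_iff, ha]
      omega
    by_cases haS : a ∈ S
    · have hfil : S.filter (fun k : Fin m => (k : ℕ) < i + 1) =
          insert a (S.filter fun k : Fin m => (k : ℕ) < i) := by
        ext k
        simp only [Finset.mem_filter, Finset.mem_insert, Fin.ext_iff, ha]
        constructor
        · rintro ⟨hkS, hki⟩
          rcases Nat.lt_succ_iff_lt_or_eq.mp hki with h | h
          · exact Or.inr ⟨hkS, h⟩
          · exact Or.inl h
        · rintro (h | ⟨hkS, hki⟩)
          · have : k = a := Fin.ext (show (k:ℕ) = (a:ℕ) from h)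
            exact ⟨this ▸ haS, by omega⟩
          · exact ⟨hkS, by omega⟩
      rw [hset, hfil]
      erw [Set.image_insert_eq, Finset.coe_insert, Set.image_insert_eq]
      rw [span_insert, span_insert, ih (by omega)]
    · have hfil : S.filter (fun k : Fin m => (k : ℕ) < i + 1) =
          S.filter (fun k : Fin m => (k : ℕ) < i) := by
        ext k
        simp only [Finset.mem_filter]
        constructor
        · rintro ⟨hkS, hki⟩
          refine ⟨hkS, ?_⟩
          rcases Nat.lt_succ_iff_lt_or_eq.mp hki with h | h
          · exact h
          · exact absurd ((Fin.ext (show (k:ℕ) = (a:ℕ) from h)) ▸ hkS) haS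
        · rintro ⟨hkS, hki⟩
          exact ⟨hkS, by omega⟩
      have hle : span K (A '' {k : Fin m | (k : ℕ) < i}) ≤
          span K (A '' {k : Fin m | (k : ℕ) < i + 1}) :=
        span_mono (Set.image_mono (fun k hk => by
          simp only [Set.mem_setOf_eq] at *; omega))
      have hfd : FiniteDimensional K (span K (A '' {k : Fin m | (k : ℕ) < i + 1})) :=
        FiniteDimensional.span_of_finite K ((Set.toFinite _).image _)
      have heq := Submodule.eq_of_le_of_finrank_le hle
        (by rw [hpref i (by omega), hpref (i + 1) hi, hfil])
      rw [← heq, hfil, ih (by omega)]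

lemma card_filter_le_finrank (A : Matrix (Fin m) (Fin n) K) (T : Finset (Fin m))
    (hT : LinearIndependent K (fun k : ↥T => A (k : Fin m))) (i : ℕ) :
    (T.filter fun k : Fin m => (k : ℕ) < i).card ≤
      finrank K (span K (A '' {k : Fin m | (k : ℕ) < i})) := by
  classical
  set Ti := T.filter fun k : Fin m => (k : ℕ) < i with hTi
  set W := span K (A '' {k : Fin m | (k : ℕ) < i}) with hW
  have hfd : FiniteDimensional K W := FiniteDimensional.span_of_finite K ((Set.toFinite _).image _)
  have hmemW : ∀ k : ↥Ti, A (k : Fin m) ∈ W := fun k =>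
    subset_span ⟨k, (Finset.mem_filter.mp k.2).2, rfl⟩
  have hsub : LinearIndependent K (fun k : ↥Ti => A (k : Fin m)) := by
    have e : (fun k : ↥Ti => A (k : Fin m)) = (fun k : ↥T => A (k : Fin m)) ∘
        (fun k : ↥Ti => (⟨k, (Finset.mem_filter.mp k.2).1⟩ : ↥T)) := rfl
    rw [e]
    refine hT.comp _ (fun x y hxy => ?_)
    have := congrArg Subtype.val hxy
    exact Subtype.ext this
  have hG : LinearIndependent K (fun k : ↥Ti => (⟨A (k : Fin m), hmemW k⟩ : W)) := by
    apply LinearIndependent.of_comp W.subtype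
    exact hsub
  have hcard := hG.fintype_card_le_finrank
  rwa [Fintype.card_coe] at hcard

/-- The main lemma: the row support of a rank profile matrix is the row rank profile. -/
lemma isRowRP_of_isRPM (A R : Matrix (Fin m) (Fin n) K) (hR : IsRPM A R) :
    IsRowRP A (rowSupp R) := by
  classical
  obtain ⟨hsp, hlead⟩ := hR
  obtain ⟨hcardS, hone⟩ := subPerm_half hsp
  have h01 : ∀ i j, R i j = 0 ∨ R i j = 1 := hsp.1
  set S := rowSupp R with hS
  have hz : ∀ k, k ∉ S → R k = 0 := fun k hk => rowSupp_zero_row hk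
  have hrow : ∀ k ∈ S, ∃ j, R k = Pi.single j 1 := by
    intro k hk
    obtain ⟨j0, hj0⟩ := Finset.card_eq_one.mp (hone k hk)
    refine ⟨j0, funext fun j => ?_⟩
    by_cases hj : j = j0
    · subst hj
      have hmemj : j ∈ Finset.univ.filter fun j' => R k j' ≠ 0 := by
        rw [hj0]; exact Finset.mem_singleton_self j
      have hne : R k j ≠ 0 := (Finset.mem_filter.mp hmemj).2
      rcases h01 k j with h | h
      · exact absurd h hne
      · rw [h, Pi.single_eq_same]
    · rw [Pi.single_eq_of_ne hj]
      by_contra hne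
      have hmemj : j ∈ Finset.univ.filter fun j' => R k j' ≠ 0 :=
        Finset.mem_filter.mpr ⟨Finset.mem_univ _, hne⟩
      rw [hj0, Finset.mem_singleton] at hmemj
      exact hj hmemj
  have hcolcard := (subPerm_half (isSubPerm_transpose hsp)).2
  have hcol : ∀ (k k' : Fin m) (j : Fin n), R k j ≠ 0 → R k' j ≠ 0 → k = k' := by
    intro k k' j h1 h2
    have hjT : j ∈ rowSupp Rᵀ := mem_rowSupp.mpr ⟨k, h1⟩
    obtain ⟨i0, hi0⟩ := Finset.card_eq_one.mp (hcolcard j hjT)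
    have e1 : k ∈ Finset.univ.filter fun i => Rᵀ j i ≠ 0 :=
      Finset.mem_filter.mpr ⟨Finset.mem_univ _, h1⟩
    have e2 : k' ∈ Finset.univ.filter fun i => Rᵀ j i ≠ 0 :=
      Finset.mem_filter.mpr ⟨Finset.mem_univ _, h2⟩
    rw [hi0, Finset.mem_singleton] at e1 e2
    rw [e1, e2]
  have hprefA : ∀ i : ℕ, i ≤ m →
      finrank K (span K (A '' {k : Fin m | (k : ℕ) < i})) =
        (S.filter fun k : Fin m => (k : ℕ) < i).card := by
    intro i hi
    have h1 := hlead i n hi (le_refl n)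
    rw [rank_leadSub_row R hi, rank_leadSub_row A hi] at h1
    rw [← h1, finrank_pref_subPerm R S hz hrow hcol i]
  have hfS : S.filter (fun k : Fin m => (k : ℕ) < m) = S :=
    Finset.filter_true_of_mem (fun k _ => k.isLt)
  refine ⟨hcardS, ?_, ?_⟩
  · -- linear independence of the rows of A indexed by S
    rw [linearIndependent_iff_card_eq_finrank_span]
    have hrange : (Set.range fun i : ↥S => A (i : Fin m)) = A '' ↑S := by
      ext x
      constructor
      · rintro ⟨⟨k, hk⟩, rfl⟩; exact ⟨k, hk, rfl⟩
      · rintro ⟨k, hk, rfl⟩; exact ⟨⟨k, hk⟩, rfl⟩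
    have hgreedy := span_pref_greedy A S hprefA m (le_refl m)
    rw [hfS] at hgreedy
    have : Set.finrank K (Set.range fun i : ↥S => A (i : Fin m)) = S.card := by
      rw [Set.finrank, hrange, ← hgreedy, hprefA m (le_refl m), hfS]
    rw [this, Fintype.card_coe]
  · -- lexicographic minimality
    intro T hTcard hTind
    apply lex_aux A.rank S T hcardS hTcard
    intro v
    by_cases hv : v ≤ m
    · calc (T.filter fun k : Fin m => (k : ℕ) < v).card ≤
          finrank K (span K (A '' {k : Fin m | (k : ℕ) < v})) :=
            card_filter_le_finrank A T hTind v
        _ = (S.filter fun k : Fin m => (k : ℕ) < v).card := hprefA v hv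
    · have hall : ∀ U : Finset (Fin m), U.filter (fun k : Fin m => (k : ℕ) < v) = U :=
        fun U => Finset.filter_true_of_mem (fun k _ => lt_of_lt_of_le k.isLt (by omega))
      rw [hall S, hall T, hTcard, hcardS]

lemma isRPM_transpose {A R : Matrix (Fin m) (Fin n) K} (h : IsRPM A R) : IsRPM Aᵀ Rᵀ := by
  obtain ⟨hsp, hlead⟩ := h
  constructor
  · have h1 := isSubPerm_transpose hsp
    rwa [show Aᵀ.rank = A.rank from Matrix.rank_transpose A]
  · intro i j hi hj
    have e1 : leadSub Rᵀ hi hj = (leadSub R hj hi)ᵀ := rfl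
    have e2 : leadSub Aᵀ hi hj = (leadSub A hj hi)ᵀ := rfl
    rw [e1, e2, Matrix.rank_transpose, Matrix.rank_transpose, hlead j i hj hi]

end

end Stmt5Aux

/-- the row rank profile of A is the row support of its rank profile matrix,
and the column rank profile of A is the column support of its rank profile matrix. -/
theorem stmt5 {K : Type*} [Field K] {m n : ℕ} (A R : Matrix (Fin m) (Fin n) K)
    (hR : IsRPM A R) :
    IsRowRP A (rowSupp R) ∧ IsRowRP Aᵀ (rowSupp Rᵀ) := by
  exact ⟨Stmt5Aux.isRowRP_of_isRPM A R hR,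
    Stmt5Aux.isRowRP_of_isRPM Aᵀ Rᵀ (Stmt5Aux.isRPM_transpose hR)⟩
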